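/- Let W ∈ ℝ^{d×r}, W* ∈ ℝ^{d×r}, let R be an orthogonal matrix minimizing ‖W − W*Z‖_F over orthogonal Z, and set Δ = W − W*R, N = WW^T, N* = W*(W*)^T. Suppose H is a symmetric bilinear form on symmetric d×d matrices satisfying (1−δ)‖X‖_F² ≤ X : H : X ≤ (1+δ)‖X‖_F² for all matrices X of rank at most 2r, with δ = 1/10. If ‖Δ‖_F² ≤ σ_r(N*)/40, then ΔΔ^T : H : ΔΔ^T ≤ (1+δ)·2‖N − N*‖_F², and moreover ΔΔ^T : H : ΔΔ^T − 3(N − N*) : H : (N − N*) ≤ −(1−5δ)‖N − N*‖_F². -/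

import Mathlib

open Matrix BigOperators

noncomputable section

/-- Squared Frobenius norm of a real matrix. -/
def frobSq {m n : Type*} [Fintype m] [Fintype n] (A : Matrix m n ℝ) : ℝ :=
  ∑ i, ∑ j, (A i j) ^ 2


lemma frobSq_eq_trace {m n : Type*} [Fintype m] [Fintype n] (A : Matrix m n ℝ) :
    frobSq A = Matrix.trace (Aᵀ * A) := by
  unfold frobSq
  simp only [Matrix.trace, Matrix.diag, Matrix.mul_apply, Matrix.transpose_apply]
  rw [Finset.sum_comm]
  simp [sq]

lemma frobSq_nonneg {m n : Type*} [Fintype m] [Fintype n] (A : Matrix m n ℝ) :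
    0 ≤ frobSq A := by
  unfold frobSq; positivity

lemma tr4 {d r : Type*} [Fintype d] [Fintype r] (X : Matrix d r ℝ) (Y : Matrix r d ℝ)
    (Z : Matrix d r ℝ) (U : Matrix r d ℝ) :
    Matrix.trace (X * Y * (Z * U)) = Matrix.trace ((Y * Z) * (U * X)) := by
  rw [Matrix.mul_assoc X Y (Z * U), Matrix.trace_mul_comm X (Y * (Z * U)),
    Matrix.mul_assoc Y (Z * U) X, Matrix.mul_assoc Z U X, ← Matrix.mul_assoc Y Z (U * X)]

lemma trace_CS {n : Type*} [Fintype n] (S M : Matrix n n ℝ) (hS : Sᵀ = S) (hM : Mᵀ = M) :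
    (Matrix.trace (S * M)) ^ 2 ≤ Matrix.trace (S * S) * Matrix.trace (M * M) := by
  have hSM : Matrix.trace (S * M) = ∑ p : n × n, S p.1 p.2 * M p.1 p.2 := by
    simp only [Matrix.trace, Matrix.diag, Matrix.mul_apply, Fintype.sum_prod_type]
    refine Finset.sum_congr rfl fun i _ => Finset.sum_congr rfl fun j _ => ?_
    rw [show M j i = Mᵀ i j from rfl, hM]
  have hSS : Matrix.trace (S * S) = ∑ p : n × n, S p.1 p.2 ^ 2 := by
    simp only [Matrix.trace, Matrix.diag, Matrix.mul_apply, Fintype.sum_prod_type]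
    refine Finset.sum_congr rfl fun i _ => Finset.sum_congr rfl fun j _ => ?_
    rw [show S j i = Sᵀ i j from rfl, hS, sq]
  have hMM : Matrix.trace (M * M) = ∑ p : n × n, M p.1 p.2 ^ 2 := by
    simp only [Matrix.trace, Matrix.diag, Matrix.mul_apply, Fintype.sum_prod_type]
    refine Finset.sum_congr rfl fun i _ => Finset.sum_congr rfl fun j _ => ?_
    rw [show M j i = Mᵀ i j from rfl, hM, sq]
  rw [hSM, hSS, hMM]
  exact Finset.sum_mul_sq_le_sq_mul_sq _ _ _

lemma stdBasis_transpose {n : Type*} [Fintype n] [DecidableEq n] (i j : n) (c : ℝ) :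
    (Matrix.single i j c)ᵀ = Matrix.single j i c := by
  ext a b
  simp [Matrix.single, Matrix.transpose_apply, and_comm]

lemma trace_mul_stdBasis {n : Type*} [Fintype n] [DecidableEq n] (C : Matrix n n ℝ)
    (k l : n) (x : ℝ) :
    Matrix.trace (C * Matrix.single k l x) = C l k * x := by
  simp only [Matrix.trace, Matrix.diag, Matrix.mul_apply, Matrix.single, Matrix.of_apply]
  simp [ite_and, Finset.sum_ite_eq, Finset.sum_ite_eq', mul_comm]

lemma vecMulVec_transpose {n : Type*} [Fintype n] (v w : n → ℝ) :
    (Matrix.vecMulVec v w)ᵀ = Matrix.vecMulVec w v := by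
  ext a b; simp [Matrix.vecMulVec_apply, mul_comm]

lemma vecMulVec_mul_vecMulVec {n : Type*} [Fintype n] (v w x y : n → ℝ) :
    Matrix.vecMulVec v w * Matrix.vecMulVec x y = (w ⬝ᵥ x) • Matrix.vecMulVec v y := by
  ext a b
  simp only [Matrix.mul_apply, Matrix.vecMulVec_apply, Matrix.smul_apply, dotProduct,
    smul_eq_mul]
  rw [Finset.sum_mul]
  exact Finset.sum_congr rfl fun k _ => by ring

lemma trace_mul_vecMulVec {n : Type*} [Fintype n] (C : Matrix n n ℝ) (v : n → ℝ) :
    Matrix.trace (C * Matrix.vecMulVec v v) = v ⬝ᵥ C.mulVec v := by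
  simp only [Matrix.trace, Matrix.diag, Matrix.mul_apply, Matrix.vecMulVec_apply, dotProduct,
    Matrix.mulVec, Finset.mul_sum]
  exact Finset.sum_congr rfl fun i _ => Finset.sum_congr rfl fun j _ => by ring

lemma givens_orth {n : Type*} [Fintype n] [DecidableEq n] {i j : n} (hij : i ≠ j)
    {c s : ℝ} (h : c ^ 2 + s ^ 2 = 1) :
    (1 + Matrix.single i i (c - 1) + Matrix.single j j (c - 1) +
        Matrix.single j i s + Matrix.single i j (-s)) *
      (1 + Matrix.single i i (c - 1) + Matrix.single j j (c - 1) +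
        Matrix.single j i s + Matrix.single i j (-s))ᵀ = 1 := by
  have z1 : ∀ (x y : ℝ), Matrix.single i i x * Matrix.single j j y = (0 : Matrix n n ℝ) :=
    fun x y => Matrix.single_mul_single_of_ne _ _ _ _ hij _
  have z2 : ∀ (x y : ℝ), Matrix.single i i x * Matrix.single j i y = (0 : Matrix n n ℝ) :=
    fun x y => Matrix.single_mul_single_of_ne _ _ _ _ hij _
  have z3 : ∀ (x y : ℝ), Matrix.single j j x * Matrix.single i i y = (0 : Matrix n n ℝ) :=
    fun x y => Matrix.single_mul_single_of_ne _ _ _ _ hij.symm _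
  have z4 : ∀ (x y : ℝ), Matrix.single j j x * Matrix.single i j y = (0 : Matrix n n ℝ) :=
    fun x y => Matrix.single_mul_single_of_ne _ _ _ _ hij.symm _
  have z5 : ∀ (x y : ℝ), Matrix.single j i x * Matrix.single j j y = (0 : Matrix n n ℝ) :=
    fun x y => Matrix.single_mul_single_of_ne _ _ _ _ hij _
  have z6 : ∀ (x y : ℝ), Matrix.single j i x * Matrix.single j i y = (0 : Matrix n n ℝ) :=
    fun x y => Matrix.single_mul_single_of_ne _ _ _ _ hij _
  have z7 : ∀ (x y : ℝ), Matrix.single i j x * Matrix.single i i y = (0 : Matrix n n ℝ) :=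
    fun x y => Matrix.single_mul_single_of_ne _ _ _ _ hij.symm _
  have z8 : ∀ (x y : ℝ), Matrix.single i j x * Matrix.single i j y = (0 : Matrix n n ℝ) :=
    fun x y => Matrix.single_mul_single_of_ne _ _ _ _ hij.symm _
  simp only [Matrix.transpose_add, Matrix.transpose_one, stdBasis_transpose]
  simp only [Matrix.add_mul, Matrix.mul_add, Matrix.one_mul, Matrix.mul_one,
    Matrix.single_mul_single_same, z1, z2, z3, z4, z5, z6, z7, z8, add_zero, zero_add]
  ext a b
  simp only [Matrix.add_apply, Matrix.one_apply, Matrix.single, Matrix.of_apply]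
  split_ifs <;> simp_all <;> nlinarith [h]


set_option maxHeartbeats 2000000 in
/-- Local regime of the unified analysis: with `R` the optimal orthogonal alignment of
`W` to `W*`, `Δ = W − W*R`, `N = WWᵀ`, `N* = W*(W*)ᵀ`, and a symmetric bilinear form `H`
that is a `(2r, δ)`-restricted isometry with `δ = 1/10`, if `‖Δ‖_F² ≤ σ_r(N*)/40`
(`σr` being a lower bound on the eigenvalues of `(W*)ᵀW*`, i.e. on `σ_r(N*)`), then
`ΔΔᵀ:H:ΔΔᵀ ≤ (1+δ)·2‖N−N*‖_F²` and
`ΔΔᵀ:H:ΔΔᵀ − 3(N−N*):H:(N−N*) ≤ −(1−5δ)‖N−N*‖_F²`. -/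
theorem stmt14 {d r : ℕ}
    (Hf : Matrix (Fin d) (Fin d) ℝ →ₗ[ℝ] Matrix (Fin d) (Fin d) ℝ →ₗ[ℝ] ℝ)
    (hHsymm : ∀ X Y, Hf X Y = Hf Y X)
    (hRIP : ∀ X : Matrix (Fin d) (Fin d) ℝ, X.rank ≤ 2 * r →
      (1 - 1 / 10) * frobSq X ≤ Hf X X ∧ Hf X X ≤ (1 + 1 / 10) * frobSq X)
    (W Wstar : Matrix (Fin d) (Fin r) ℝ)
    (R : Matrix (Fin r) (Fin r) ℝ) (hR : R ∈ Matrix.orthogonalGroup (Fin r) ℝ)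
    (hmin : ∀ Z ∈ Matrix.orthogonalGroup (Fin r) ℝ,
      frobSq (W - Wstar * R) ≤ frobSq (W - Wstar * Z))
    (σr : ℝ)
    (hσ : ∀ x : Fin r → ℝ, σr * (∑ i, x i ^ 2) ≤ x ⬝ᵥ (Wstarᵀ * Wstar).mulVec x)
    (hΔ : frobSq (W - Wstar * R) ≤ σr / 40) :
    Hf ((W - Wstar * R) * (W - Wstar * R)ᵀ) ((W - Wstar * R) * (W - Wstar * R)ᵀ) ≤
        (1 + 1 / 10) * (2 * frobSq (W * Wᵀ - Wstar * Wstarᵀ)) ∧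
      Hf ((W - Wstar * R) * (W - Wstar * R)ᵀ) ((W - Wstar * R) * (W - Wstar * R)ᵀ) -
          3 * Hf (W * Wᵀ - Wstar * Wstarᵀ) (W * Wᵀ - Wstar * Wstarᵀ) ≤
        -(1 - 5 * (1 / 10)) * frobSq (W * Wᵀ - Wstar * Wstarᵀ) := by
  have hRo : R * Rᵀ = 1 := by
    have h := (Matrix.mem_orthogonalGroup_iff (Fin r) ℝ).mp hR
    exact h
  set A := Wstar * R with hAdef
  set Δ := W - A with hDdef
  set C := Wᵀ * A with hCdef
  -- expansion of the objective
  have expand : ∀ Z : Matrix (Fin r) (Fin r) ℝ, Z * Zᵀ = 1 →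
      frobSq (W - Wstar * Z) = Matrix.trace (Wᵀ * W) + Matrix.trace (Wstarᵀ * Wstar)
        - 2 * Matrix.trace (Wᵀ * (Wstar * Z)) := by
    intro Z hZ
    rw [frobSq_eq_trace]
    have e1 : Matrix.trace (Zᵀ * (Wstarᵀ * (Wstar * Z))) = Matrix.trace (Wstarᵀ * Wstar) := by
      rw [Matrix.trace_mul_comm]
      rw [show (Wstarᵀ * (Wstar * Z)) * Zᵀ = Wstarᵀ * (Wstar * (Z * Zᵀ)) by
        simp [Matrix.mul_assoc], hZ, Matrix.mul_one]
    have e2 : Matrix.trace (Zᵀ * (Wstarᵀ * W)) = Matrix.trace (Wᵀ * (Wstar * Z)) := by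
      calc Matrix.trace (Zᵀ * (Wstarᵀ * W)) = Matrix.trace ((Zᵀ * (Wstarᵀ * W))ᵀ) :=
            (Matrix.trace_transpose _).symm
        _ = Matrix.trace (Wᵀ * (Wstar * Z)) := by
            simp [Matrix.transpose_mul, Matrix.mul_assoc]
    simp only [Matrix.transpose_sub, Matrix.transpose_mul, Matrix.sub_mul, Matrix.mul_sub,
      Matrix.trace_sub, Matrix.mul_assoc]
    rw [e1, e2]
    ring
  -- key inequality from optimality of R
  have key : ∀ Q : Matrix (Fin r) (Fin r) ℝ, Q * Qᵀ = 1 →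
      Matrix.trace (C * Q) ≤ Matrix.trace C := by
    intro Q hQ
    have hZo : (R * Q) * (R * Q)ᵀ = 1 := by
      rw [Matrix.transpose_mul]
      rw [show R * Q * (Qᵀ * Rᵀ) = R * (Q * Qᵀ * Rᵀ) by simp [Matrix.mul_assoc], hQ,
        Matrix.one_mul, hRo]
    have hmem : (R * Q) ∈ Matrix.orthogonalGroup (Fin r) ℝ := by
      rw [Matrix.mem_orthogonalGroup_iff]
      exact hZo
    have h := hmin (R * Q) hmem
    rw [expand (R * Q) hZo] at h
    have h0 := expand R hRo
    rw [← hAdef, ← hDdef] at h0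
    rw [h0] at h
    have hc : C * Q = Wᵀ * (Wstar * (R * Q)) := by
      rw [hCdef, hAdef]; simp [Matrix.mul_assoc]
    rw [hc, hCdef, hAdef]
    linarith
  -- symmetry of C
  have hsym : ∀ p q : Fin r, C p q = C q p := by
    intro p q
    by_cases hpq : p = q
    · rw [hpq]
    · set a := C p p + C q q with hadef
      set b := C p q - C q p with hbdef
      by_cases h0 : a ^ 2 + b ^ 2 = 0
      · have hb : b = 0 := by nlinarith [sq_nonneg a, sq_nonneg b]
        rw [hbdef] at hb; linarith
      · have hlpos : 0 < Real.sqrt (a ^ 2 + b ^ 2) :=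
          Real.sqrt_pos.mpr (lt_of_le_of_ne (by positivity) (Ne.symm h0))
        set l := Real.sqrt (a ^ 2 + b ^ 2) with hldef
        have hl2 : l ^ 2 = a ^ 2 + b ^ 2 := Real.sq_sqrt (by positivity)
        set c := a / l with hcdef2
        set s := b / l with hsdef2
        have hcs : c ^ 2 + s ^ 2 = 1 := by
          rw [hcdef2, hsdef2, div_pow, div_pow, ← add_div, ← hl2]
          exact div_self (by positivity)
        have horth := givens_orth hpq hcs
        have hk := key _ horth
        have ht : Matrix.trace (C * (1 + Matrix.single p p (c - 1) +
            Matrix.single q q (c - 1) + Matrix.single q p s +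
            Matrix.single p q (-s))) = Matrix.trace C + (c - 1) * a + s * b := by
          simp only [Matrix.mul_add, Matrix.mul_one, Matrix.trace_add, trace_mul_stdBasis]
          rw [hadef, hbdef]; ring
        rw [ht] at hk
        have hca : c * a + s * b = l := by
          rw [hcdef2, hsdef2, div_mul_eq_mul_div, div_mul_eq_mul_div, ← add_div,
            ← sq, ← sq, ← hl2, sq, mul_div_assoc, div_self hlpos.ne', mul_one]
        have hba : l ≤ a := by linarith
        have hb : b = 0 := by nlinarith [sq_nonneg b]
        rw [hbdef] at hb; linarith
  have hCsym : Cᵀ = C := by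
    ext p q; rw [Matrix.transpose_apply]; exact hsym q p
  -- positive semidefiniteness of C
  have hpsd : ∀ v : Fin r → ℝ, 0 ≤ v ⬝ᵥ C.mulVec v := by
    intro v
    by_cases hv : v = 0
    · simp [hv]
    · have hvv : 0 < v ⬝ᵥ v := by
        obtain ⟨i0, hi0⟩ : ∃ i0, v i0 ≠ 0 := by
          by_contra hh; push_neg at hh; exact hv (funext hh)
        refine Finset.sum_pos' (fun i _ => mul_self_nonneg _)
          ⟨i0, Finset.mem_univ _, mul_self_pos.mpr hi0⟩
      set t := 2 / (v ⬝ᵥ v) with htdef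
      have ht : 0 < t := by positivity
      have hPP : (t • Matrix.vecMulVec v v) * (t • Matrix.vecMulVec v v)
          = (t * (t * (v ⬝ᵥ v))) • Matrix.vecMulVec v v := by
        rw [Matrix.smul_mul, Matrix.mul_smul, _root_.vecMulVec_mul_vecMulVec, smul_smul, smul_smul, mul_assoc]
      have hco : t * (t * (v ⬝ᵥ v)) = t + t := by
        rw [htdef]; field_simp; norm_num
      have horth : (1 - t • Matrix.vecMulVec v v) * (1 - t • Matrix.vecMulVec v v)ᵀ = 1 := by
        rw [Matrix.transpose_sub, Matrix.transpose_smul, Matrix.transpose_one, vecMulVec_transpose]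
        rw [Matrix.sub_mul, Matrix.mul_sub, Matrix.mul_sub, Matrix.one_mul, Matrix.mul_one,
          hPP, hco, add_smul]
        simp
      have hk := key _ horth
      have htr : Matrix.trace (C * (1 - t • Matrix.vecMulVec v v))
          = Matrix.trace C - t * (v ⬝ᵥ C.mulVec v) := by
        rw [Matrix.mul_sub, Matrix.mul_one, Matrix.trace_sub, Matrix.mul_smul, Matrix.trace_smul,
          trace_mul_vecMulVec, smul_eq_mul]
      rw [htr] at hk
      nlinarith [ht, hk]
  -- matrices S, M, G
  set S := Aᵀ * Δ with hSdef
  set M := Δᵀ * Δ with hMdef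
  set G := Aᵀ * A with hGdef
  have hMsym : Mᵀ = M := by rw [hMdef]; simp [Matrix.transpose_mul]
  have hSsym : Sᵀ = S := by
    have h1 : Δᵀ * A = C - Aᵀ * A := by
      rw [hDdef, hCdef]; simp [Matrix.sub_mul, Matrix.transpose_sub]
    have h2 : Aᵀ * Δ = Cᵀ - Aᵀ * A := by
      rw [hDdef]
      rw [show Cᵀ = Aᵀ * W by rw [hCdef]; simp [Matrix.transpose_mul]]
      simp [Matrix.mul_sub]
    rw [hSdef, Matrix.transpose_mul, Matrix.transpose_transpose, h1, h2, hCsym]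
  have hTS : Δᵀ * A = S := by
    rw [← hSsym, hSdef, Matrix.transpose_mul, Matrix.transpose_transpose]
  have hAA : Wstar * Wstarᵀ = A * Aᵀ := by
    rw [hAdef, Matrix.transpose_mul]
    rw [show Wstar * R * (Rᵀ * Wstarᵀ) = Wstar * (R * Rᵀ * Wstarᵀ) by simp [Matrix.mul_assoc],
      hRo, Matrix.one_mul]
  have hE : W * Wᵀ - Wstar * Wstarᵀ = A * Δᵀ + Δ * Aᵀ + Δ * Δᵀ := by
    rw [hAA, hDdef]
    simp only [Matrix.mul_sub, Matrix.sub_mul, Matrix.transpose_sub]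
    abel
  -- the identity for ‖N - N*‖² in terms of r×r traces
  have hId : frobSq (W * Wᵀ - Wstar * Wstarᵀ) = 2 * Matrix.trace (S * S)
      + 2 * Matrix.trace (G * M) + 4 * Matrix.trace (S * M) + Matrix.trace (M * M) := by
    rw [frobSq_eq_trace, hE]
    rw [show (A * Δᵀ + Δ * Aᵀ + Δ * Δᵀ)ᵀ = Δ * Aᵀ + A * Δᵀ + Δ * Δᵀ by
      simp [Matrix.transpose_add, Matrix.transpose_mul]]
    simp only [Matrix.add_mul, Matrix.mul_add, Matrix.trace_add]
    rw [tr4 Δ Aᵀ A Δᵀ, tr4 Δ Aᵀ Δ Aᵀ, tr4 Δ Aᵀ Δ Δᵀ,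
      tr4 A Δᵀ A Δᵀ, tr4 A Δᵀ Δ Aᵀ, tr4 A Δᵀ Δ Δᵀ,
      tr4 Δ Δᵀ A Δᵀ, tr4 Δ Δᵀ Δ Aᵀ, tr4 Δ Δᵀ Δ Δᵀ]
    rw [hTS, ← hSdef, ← hMdef, ← hGdef]
    rw [Matrix.trace_mul_comm M G, Matrix.trace_mul_comm M S]
    ring
  have hfD : frobSq (Δ * Δᵀ) = Matrix.trace (M * M) := by
    rw [frobSq_eq_trace]
    rw [show (Δ * Δᵀ)ᵀ = Δ * Δᵀ by simp [Matrix.transpose_mul]]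
    rw [tr4 Δ Δᵀ Δ Δᵀ, ← hMdef]
  have hs2 : 0 ≤ Matrix.trace (S * S) := by
    have h1 : frobSq S = Matrix.trace (S * S) := by rw [frobSq_eq_trace, hSsym]
    linarith [frobSq_nonneg S]
  have hm2 : 0 ≤ Matrix.trace (M * M) := by
    have h1 : frobSq M = Matrix.trace (M * M) := by rw [frobSq_eq_trace, hMsym]
    linarith [frobSq_nonneg M]
  have hq2 := trace_CS S M hSsym hMsym
  have hGS : 0 ≤ Matrix.trace (G * M) + Matrix.trace (S * M) := by
    have hGSC : G + S = C := by
      rw [hGdef, hSdef, hDdef, ← hCsym,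
        show Cᵀ = Aᵀ * W by rw [hCdef]; simp [Matrix.transpose_mul]]
      simp only [Matrix.mul_sub]
      abel
    have e1 : Matrix.trace (G * M) + Matrix.trace (S * M) = Matrix.trace (Δ * C * Δᵀ) := by
      rw [← Matrix.trace_add, ← Matrix.add_mul, hGSC, hMdef, ← Matrix.mul_assoc,
        Matrix.trace_mul_comm, ← Matrix.mul_assoc]
    have hdiag : ∀ i, (Δ * C * Δᵀ) i i = (fun j => Δ i j) ⬝ᵥ C.mulVec (fun j => Δ i j) := by
      intro i
      simp only [Matrix.mul_apply, Matrix.transpose_apply, dotProduct, Matrix.mulVec,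
        Finset.sum_mul, Finset.mul_sum]
      rw [Finset.sum_comm]
      exact Finset.sum_congr rfl fun a _ => Finset.sum_congr rfl fun b2 _ => by ring
    rw [e1]
    rw [Matrix.trace]
    refine Finset.sum_nonneg fun i _ => ?_
    rw [Matrix.diag_apply, hdiag i]
    exact hpsd _
  have hmain : frobSq (Δ * Δᵀ) ≤ 2 * frobSq (W * Wᵀ - Wstar * Wstarᵀ) := by
    rw [hfD, hId]
    nlinarith [hq2, hs2, hm2, hGS, sq_nonneg (4 * Matrix.trace (S * S) - Matrix.trace (M * M))]
  have hrk1 : (Δ * Δᵀ).rank ≤ 2 * r := by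
    calc (Δ * Δᵀ).rank ≤ Δ.rank := Matrix.rank_mul_le_left _ _
      _ ≤ Fintype.card (Fin r) := Matrix.rank_le_card_width _
      _ = r := Fintype.card_fin r
      _ ≤ 2 * r := by omega
  have hker : W * Wᵀ - Wstar * Wstarᵀ = Matrix.fromCols W Δ * Matrix.fromRows Δᵀ Aᵀ := by
    rw [Matrix.fromCols_mul_fromRows, hAA, hDdef]
    simp only [Matrix.mul_sub, Matrix.sub_mul, Matrix.transpose_sub]
    abel
  have hrk2 : (W * Wᵀ - Wstar * Wstarᵀ).rank ≤ 2 * r := by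
    rw [hker]
    calc (Matrix.fromCols W Δ * Matrix.fromRows Δᵀ Aᵀ).rank
        ≤ (Matrix.fromCols W Δ).rank := Matrix.rank_mul_le_left _ _
      _ ≤ Fintype.card (Fin r ⊕ Fin r) := Matrix.rank_le_card_width _
      _ = 2 * r := by simp [Fintype.card_sum]; omega
  obtain ⟨hl1, hu1⟩ := hRIP (Δ * Δᵀ) hrk1
  obtain ⟨hl2, hu2⟩ := hRIP (W * Wᵀ - Wstar * Wstarᵀ) hrk2
  constructor
  · linarith
  · linarith

end
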